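/- arXiv:2005.00275 — 3 statements merged into one kernel-verified Lean document; each statement's English description precedes it below -/
import Mathlib

section
/- Let V₁ and V₂ be two disjoint finite families of irreducible hypersurfaces in ℂ^k and let x ∈ ℂ^k ∖ (V₁ ∪ V₂). Then the homomorphism η : π₁(ℂ^k ∖ (V₁ ∪ V₂), x) → π₁(ℂ^k ∖ V₁, x) induced by inclusion is surjective. -/
/-!
STATEMENT 4 (Bessis's Lemma, surjectivity part): For V₁, V₂ two disjoint finite families
of irreducible hypersurfaces in ℂ^k and x ∈ ℂ^k ∖ (V₁ ∪ V₂), the canonical morphism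
η : π₁(ℂ^k ∖ (V₁ ∪ V₂), x) → π₁(ℂ^k ∖ V₁, x) induced by inclusion is surjective.
Fundamental groups are formalized as quotients of loops by homotopy, and η as the map
induced on homotopy classes of loops by the inclusion of complements.
-/

open MvPolynomial Metric Set

namespace BessisAux

variable {k : ℕ}

/-- evaluation of an `MvPolynomial` along a (complex) line, as a one-variable polynomial -/
noncomputable def lineP (q : MvPolynomial (Fin k) ℂ) (a d : Fin k → ℂ) : Polynomial ℂ :=
  MvPolynomial.aeval (fun i => Polynomial.C (a i) + Polynomial.C (d i) * Polynomial.X) q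

lemma eval_lineP (q : MvPolynomial (Fin k) ℂ) (a d : Fin k → ℂ) (s : ℂ) :
    Polynomial.eval s (lineP q a d) = eval (a + s • d) q := by
  have h : (Polynomial.aeval s : Polynomial ℂ →ₐ[ℂ] ℂ).comp
      (MvPolynomial.aeval (fun i => Polynomial.C (a i) + Polynomial.C (d i) * Polynomial.X))
      = MvPolynomial.aeval (a + s • d) := by
    apply MvPolynomial.algHom_ext
    intro i
    simp only [AlgHom.comp_apply, MvPolynomial.aeval_X, map_add, map_mul,
      Polynomial.aeval_C, Polynomial.aeval_X, Pi.add_apply, Pi.smul_apply, smul_eq_mul]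
    simp [Algebra.algebraMap_self]; ring
  have h2 := congrArg (fun φ => φ q) h
  simp only [AlgHom.comp_apply] at h2
  rw [lineP, ← Polynomial.coe_aeval_eq_eval, h2, ← MvPolynomial.coe_aeval_eq_eval]
  rfl

end BessisAux

namespace BessisAux

open MeasureTheory

lemma span_singleton_ne_top (r : ℂ) : Submodule.span ℝ {r} ≠ ⊤ := by
  intro h
  have h1 : (1 : ℂ) ∈ Submodule.span ℝ ({r} : Set ℂ) := h ▸ Submodule.mem_top
  have hI : Complex.I ∈ Submodule.span ℝ ({r} : Set ℂ) := h ▸ Submodule.mem_top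
  rw [Submodule.mem_span_singleton] at h1 hI
  obtain ⟨c, hc⟩ := h1
  obtain ⟨c', hc'⟩ := hI
  have hc0 : c ≠ 0 := by
    intro h0; rw [h0, zero_smul] at hc; exact zero_ne_one hc
  have : Complex.I = ((c' / c : ℝ) : ℂ) := by
    rw [← hc']
    rw [Complex.real_smul] at hc hc' ⊢
    have hr : r = (↑c)⁻¹ := by
      rw [mul_comm] at hc
      exact eq_inv_of_mul_eq_one_left hc
    rw [hr]
    push_cast
    field_simp
  have him := congrArg Complex.im this
  simp at him

variable {k : ℕ}

/-- `good S₂ a b` : the segment from `a` to `b` avoids the zero set of every `q ∈ S₂`. -/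
def good (S₂ : Finset (MvPolynomial (Fin k) ℂ)) (a b : Fin k → ℂ) : Prop :=
  ∀ t : ℝ, t ∈ Icc (0:ℝ) 1 → ∀ q ∈ S₂, eval (a + (t : ℂ) • (b - a)) q ≠ 0

lemma good_dense (S₂ : Finset (MvPolynomial (Fin k) ℂ)) (a : Fin k → ℂ)
    (ha : ∀ q ∈ S₂, eval a q ≠ 0) (c : Fin k → ℂ) (ε : ℝ) (hε : 0 < ε) :
    ∃ b : Fin k → ℂ, dist b c < ε ∧ good S₂ a b := by
  set d : Fin k → ℂ := c - a with hd
  by_cases hd0 : d = 0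
  · refine ⟨a, ?_, ?_⟩
    · have : a = c := by
        have := hd0; rw [hd, sub_eq_zero] at this; exact this.symm
      rw [this, dist_self]; exact hε
    · intro t ht q hq
      simp only [sub_self, smul_zero, add_zero]
      exact ha q hq
  · set Q : Polynomial ℂ := ∏ q ∈ S₂, lineP q a d with hQdef
    have hQ0 : Q.eval 0 ≠ 0 := by
      rw [hQdef, Polynomial.eval_prod]
      rw [Finset.prod_ne_zero_iff]
      intro q hq
      rw [eval_lineP, zero_smul, add_zero]
      exact ha q hq
    have hQ : Q ≠ 0 := fun h => hQ0 (by rw [h, Polynomial.eval_zero])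
    have hR : {z : ℂ | Q.IsRoot z}.Finite := Polynomial.finite_setOf_isRoot hQ
    set Bad : Set ℂ := ⋃ r ∈ {z : ℂ | Q.IsRoot z}, (Submodule.span ℝ ({r} : Set ℂ) : Set ℂ)
      with hBad
    have hBad0 : volume Bad = 0 := by
      rw [hBad, measure_biUnion_null_iff hR.countable]
      intro r _
      exact Measure.addHaar_submodule volume _ (span_singleton_ne_top r)
    have hdn : (0:ℝ) < ‖d‖ := norm_pos_iff.mpr hd0
    have hbp : 0 < volume (ball (1:ℂ) (ε / ‖d‖)) :=
      measure_ball_pos volume 1 (div_pos hε hdn)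
    have hex : ∃ s, s ∈ ball (1:ℂ) (ε / ‖d‖) ∧ s ∉ Bad := by
      by_contra h
      push_neg at h
      have hsub : ball (1:ℂ) (ε / ‖d‖) ⊆ Bad := fun s hs => h s hs
      have : volume (ball (1:ℂ) (ε / ‖d‖)) ≤ volume Bad := measure_mono hsub
      rw [hBad0] at this
      exact absurd (le_antisymm this zero_le) (ne_of_gt hbp)
    obtain ⟨s, hs, hsBad⟩ := hex
    refine ⟨a + s • d, ?_, ?_⟩
    · have hc : c = a + d := by rw [hd]; abel
      rw [hc, dist_eq_norm]
      have : a + s • d - (a + d) = (s - 1) • d := by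
        rw [sub_smul, one_smul]; abel
      rw [this, norm_smul]
      calc ‖s - 1‖ * ‖d‖ < ε / ‖d‖ * ‖d‖ := by
            apply mul_lt_mul_of_pos_right _ hdn
            rw [← dist_eq_norm]; exact mem_ball.mp hs
        _ = ε := div_mul_cancel₀ ε (ne_of_gt hdn)
    · intro t ht q hq heval
      have hba : a + s • d - a = s • d := add_sub_cancel_left a (s • d)
      rw [hba] at heval
      have hsm : (t : ℂ) • (s • d) = ((t : ℂ) * s) • d := smul_smul _ _ _
      rw [hsm] at heval
      have hroot : ((t : ℂ) * s) ∈ {z : ℂ | Q.IsRoot z} := by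
        have hl : Polynomial.eval ((t:ℂ) * s) (lineP q a d) = 0 := by
          rw [eval_lineP]; exact heval
        show Q.IsRoot _
        rw [hQdef]
        exact Polynomial.IsRoot.def.mpr
          (by rw [Polynomial.eval_prod]; exact Finset.prod_eq_zero hq hl)
      by_cases ht0 : t = 0
      · rw [ht0] at hroot
        simp only [Complex.ofReal_zero, zero_mul] at hroot
        exact hQ0 hroot
      · apply hsBad
        rw [hBad]
        apply Set.mem_biUnion hroot
        rw [SetLike.mem_coe, Submodule.mem_span_singleton]
        refine ⟨t⁻¹, ?_⟩
        rw [Complex.real_smul]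
        have htc : (t:ℂ) ≠ 0 := by exact_mod_cast ht0
        push_cast
        field_simp

end BessisAux

namespace BessisAux

variable {k : ℕ}

lemma continuous_eval' (q : MvPolynomial (Fin k) ℂ) :
    Continuous fun y : Fin k → ℂ => eval y q := MvPolynomial.continuous_eval q

lemma good_open (S₂ : Finset (MvPolynomial (Fin k) ℂ)) (a : Fin k → ℂ) :
    IsOpen {b : Fin k → ℂ | good S₂ a b} := by
  have key : IsClosed {b : Fin k → ℂ | ¬ good S₂ a b} := by
    set C : Set ((Icc (0:ℝ) 1) × (Fin k → ℂ)) :=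
      {p | ∃ q ∈ S₂, eval (a + ((p.1 : ℝ) : ℂ) • (p.2 - a)) q = 0} with hC
    have hCclosed : IsClosed C := by
      have : C = ⋃ q ∈ (S₂ : Set (MvPolynomial (Fin k) ℂ)),
          {p : (Icc (0:ℝ) 1) × (Fin k → ℂ) |
            eval (a + ((p.1 : ℝ) : ℂ) • (p.2 - a)) q = 0} := by
        ext p; simp [hC]
      rw [this]
      apply Set.Finite.isClosed_biUnion S₂.finite_toSet
      intro q _
      have hcont : Continuous fun p : (Icc (0:ℝ) 1) × (Fin k → ℂ) =>
          eval (a + ((p.1 : ℝ) : ℂ) • (p.2 - a)) q := by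
        apply (continuous_eval' q).comp
        exact continuous_const.add
          (((Complex.continuous_ofReal.comp
            (continuous_subtype_val.comp continuous_fst))).smul
            (continuous_snd.sub continuous_const))
      exact isClosed_eq hcont continuous_const
    have himg : {b : Fin k → ℂ | ¬ good S₂ a b} = Prod.snd '' C := by
      ext b
      constructor
      · intro hb
        unfold good at hb
        push_neg at hb
        obtain ⟨t, ht, q, hq, heq⟩ := hb
        exact ⟨(⟨t, ht⟩, b), ⟨q, hq, heq⟩, rfl⟩
      · rintro ⟨⟨t, b'⟩, hp, rfl⟩
        obtain ⟨q, hq, heq⟩ := hp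
        intro hgood
        exact hgood t t.2 q hq heq
    rw [himg]
    exact isClosedMap_snd_of_compactSpace C hCclosed
  have : {b : Fin k → ℂ | good S₂ a b} = {b : Fin k → ℂ | ¬ good S₂ a b}ᶜ := by
    ext b; simp
  rw [this]
  exact key.isOpen_compl

/-- points reachable: `good` from `a` and `good` from `x`, near `c`. -/
lemma good_next (S₂ : Finset (MvPolynomial (Fin k) ℂ)) (a x c : Fin k → ℂ)
    (ha : ∀ q ∈ S₂, eval a q ≠ 0) (hx : ∀ q ∈ S₂, eval x q ≠ 0)
    (ε : ℝ) (hε : 0 < ε) :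
    ∃ b : Fin k → ℂ, dist b c < ε ∧ good S₂ a b ∧ good S₂ x b := by
  obtain ⟨b₀, hb₀, hb₀good⟩ := good_dense S₂ a ha c ε hε
  have hopen : IsOpen ({b | good S₂ a b} ∩ ball c ε) :=
    (good_open S₂ a).inter isOpen_ball
  have hb₀mem : b₀ ∈ {b | good S₂ a b} ∩ ball c ε := ⟨hb₀good, mem_ball.mpr hb₀⟩
  obtain ⟨δ, hδ, hδsub⟩ := Metric.isOpen_iff.mp hopen b₀ hb₀mem
  obtain ⟨b, hb, hbgood⟩ := good_dense S₂ x hx b₀ δ hδ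
  have hbmem := hδsub (mem_ball.mpr hb)
  exact ⟨b, mem_ball.mp hbmem.2, hbmem.1, hbgood⟩

/-- the endpoint of a good segment is itself outside the zero sets -/
lemma good_endpoint {S₂ : Finset (MvPolynomial (Fin k) ℂ)} {a b : Fin k → ℂ}
    (h : good S₂ a b) : ∀ q ∈ S₂, eval b q ≠ 0 := by
  intro q hq
  have := h 1 (by constructor <;> norm_num) q hq
  simpa using this

end BessisAux

namespace BessisAux

variable {k : ℕ}

lemma real_smul_eq (r : ℝ) (v : Fin k → ℂ) : r • v = (r : ℂ) • v := by
  funext i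
  simp [Complex.real_smul]

/-- chain of vertices -/
lemma chain (S₂ : Finset (MvPolynomial (Fin k) ℂ)) (x : Fin k → ℂ)
    (hx : ∀ q ∈ S₂, eval x q ≠ 0) (c : ℕ → Fin k → ℂ) (δ : ℝ) (hδ : 0 < δ) (m : ℕ) :
    ∃ z : ℕ → Fin k → ℂ, z 0 = x ∧ ∀ i < m,
      good S₂ (z i) (z (i+1)) ∧ good S₂ x (z (i+1)) ∧ dist (z (i+1)) (c (i+1)) < δ := by
  induction m with
  | zero => exact ⟨fun _ => x, rfl, fun i hi => absurd hi (Nat.not_lt_zero i)⟩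
  | succ m ih =>
    obtain ⟨z, hz0, hz⟩ := ih
    have hzm : ∀ q ∈ S₂, eval (z m) q ≠ 0 := by
      rcases Nat.eq_zero_or_pos m with hm | hm
      · rw [hm, hz0]; exact hx
      · obtain ⟨m', rfl⟩ := Nat.exists_eq_add_of_lt hm
        simp only [Nat.zero_add] at *
        exact good_endpoint (hz m' (Nat.lt_succ_self m')).2.1
    obtain ⟨b, hbd, hbga, hbgx⟩ := good_next S₂ (z m) x (c (m+1)) hzm hx δ hδ
    refine ⟨Function.update z (m+1) b, ?_, ?_⟩
    · rw [Function.update_of_ne (Nat.succ_ne_zero m).symm, hz0]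
    · intro i hi
      rcases Nat.lt_succ_iff_lt_or_eq.mp hi with hi' | rfl
      · have h1 : Function.update z (m+1) b i = z i :=
          Function.update_of_ne (by omega) _ _
        have h2 : Function.update z (m+1) b (i+1) = z (i+1) :=
          Function.update_of_ne (by omega) _ _
        rw [h1, h2]
        exact hz i hi'
      · have h1 : Function.update z (i+1) b i = z i :=
          Function.update_of_ne (by omega) _ _
        have h2 : Function.update z (i+1) b (i+1) = b := Function.update_self _ _ _
        rw [h1, h2]
        exact ⟨hbga, hbgx, hbd⟩

/-- the piecewise-linear interpolation of the points `z 0, ..., z n` -/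
noncomputable def plf (z : ℕ → Fin k → ℂ) (n : ℕ) (t : ℝ) : Fin k → ℂ :=
  z (min ⌊n*t⌋₊ (n-1)) +
    (n*t - (min ⌊n*t⌋₊ (n-1) : ℕ)) • (z (min ⌊n*t⌋₊ (n-1) + 1) - z (min ⌊n*t⌋₊ (n-1)))

lemma plf_spec (z : ℕ → Fin k → ℂ) (n : ℕ) (hn : 1 ≤ n) (t : ℝ)
    (ht : t ∈ Icc (0:ℝ) 1) :
    ∃ i : ℕ, i < n ∧ (i:ℝ)/n ≤ t ∧ t ≤ ((i:ℝ)+1)/n ∧ ∃ u : ℝ, 0 ≤ u ∧ u ≤ 1 ∧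
      plf z n t = z i + u • (z (i+1) - z i) := by
  have hn0 : (0:ℝ) < n := by exact_mod_cast hn
  have hnt0 : 0 ≤ n*t := mul_nonneg hn0.le ht.1
  set j : ℕ := min ⌊n*t⌋₊ (n-1) with hj
  refine ⟨j, ?_, ?_, ?_, n*t - j, ?_, ?_, rfl⟩
  · have : j ≤ n - 1 := min_le_right _ _
    omega
  · -- (j:ℝ)/n ≤ t
    have hjf : (j:ℝ) ≤ n*t := by
      have : j ≤ ⌊n*t⌋₊ := min_le_left _ _
      calc (j:ℝ) ≤ (⌊n*t⌋₊ : ℝ) := by exact_mod_cast this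
        _ ≤ n*t := Nat.floor_le hnt0
    rw [div_le_iff₀ hn0]; linarith [hjf]
  · -- t ≤ (j+1)/n
    rw [le_div_iff₀ hn0]
    rcases le_or_gt ⌊n*t⌋₊ (n-1) with hc | hc
    · have : j = ⌊n*t⌋₊ := min_eq_left hc
      rw [this]
      have := Nat.lt_floor_add_one (n*t)
      push_cast
      linarith
    · have hjeq : j = n - 1 := min_eq_right hc.le
      have : t*n ≤ n := by
        nlinarith [ht.2]
      rw [hjeq]
      have : ((n-1:ℕ):ℝ) + 1 = n := by
        have : 1 ≤ n := hn
        push_cast [Nat.cast_sub this]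
        ring
      rw [this]
      linarith [mul_comm t (n:ℝ) ▸ ‹t*(n:ℝ) ≤ n›]
  · -- 0 ≤ n*t - j
    have hjf : (j:ℝ) ≤ n*t := by
      have h1 : j ≤ ⌊n*t⌋₊ := min_le_left _ _
      calc (j:ℝ) ≤ (⌊n*t⌋₊ : ℝ) := by exact_mod_cast h1
        _ ≤ n*t := Nat.floor_le hnt0
    linarith
  · -- n*t - j ≤ 1
    rcases le_or_gt ⌊n*t⌋₊ (n-1) with hc | hc
    · have : j = ⌊n*t⌋₊ := min_eq_left hc
      rw [this]
      have := Nat.lt_floor_add_one (n*t)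
      linarith
    · have hjeq : j = n - 1 := min_eq_right hc.le
      have hnt : n*t ≤ n := by nlinarith [ht.2]
      rw [hjeq]
      have h1 : ((n-1:ℕ):ℝ) = (n:ℝ) - 1 := by
        push_cast [Nat.cast_sub hn]
        ring
      rw [h1]
      linarith

lemma plf_eqOn (z : ℕ → Fin k → ℂ) (n : ℕ) (hn : 1 ≤ n) (i : ℕ) (hi : i < n) :
    Set.EqOn (plf z n) (fun t => z i + (n*t - i) • (z (i+1) - z i))
      (Icc ((i:ℝ)/n) (((i:ℝ)+1)/n)) := by
  intro t ht
  have hn0 : (0:ℝ) < n := by exact_mod_cast hn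
  have hti : (i:ℝ) ≤ n*t := by
    have := ht.1
    rw [div_le_iff₀ hn0] at this
    linarith
  have hti' : n*t ≤ (i:ℝ)+1 := by
    have := ht.2
    rw [le_div_iff₀ hn0] at this
    linarith
  rcases lt_or_ge (n*t) ((i:ℝ)+1) with hlt | hge
  · have hfloor : ⌊n*t⌋₊ = i := by
      rw [Nat.floor_eq_iff (le_trans (Nat.cast_nonneg i) hti)]
      constructor
      · exact hti
      · exact_mod_cast hlt
    have hmin : min ⌊n*t⌋₊ (n-1) = i := by
      rw [hfloor]
      exact min_eq_left (by omega)
    simp only [plf, hmin]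
  · have hnt : n*t = (i:ℝ)+1 := le_antisymm hti' hge
    have hfloor : ⌊n*t⌋₊ = i+1 := by
      rw [hnt]
      rw [show ((i:ℝ)+1) = ((i+1 : ℕ):ℝ) by push_cast; ring]
      exact Nat.floor_natCast _
    rcases le_or_gt (i+1) (n-1) with hc | hc
    · have hmin : min ⌊n*t⌋₊ (n-1) = i+1 := by rw [hfloor]; exact min_eq_left hc
      simp only [plf, hmin]
      rw [hnt]
      push_cast
      simp only [add_sub_cancel_right, sub_self, zero_smul, add_zero]
      have : ((i:ℝ)+1) - i = 1 := by ring
      rw [this, one_smul]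
      abel
    · have hieq : i = n-1 := by omega
      have hmin : min ⌊n*t⌋₊ (n-1) = i := by
        rw [hfloor, hieq]
        exact min_eq_right (by omega)
      simp only [plf, hmin]

lemma plf_continuousOn (z : ℕ → Fin k → ℂ) (n : ℕ) (hn : 1 ≤ n) :
    ContinuousOn (plf z n) (Icc (0:ℝ) 1) := by
  have hcover : Icc (0:ℝ) 1 ⊆ ⋃ i : Fin n, Icc ((i:ℝ)/n) (((i:ℝ)+1)/n) := by
    intro t ht
    obtain ⟨i, hi, h1, h2, _⟩ := plf_spec z n hn t ht
    exact Set.mem_iUnion.mpr ⟨⟨i, hi⟩, h1, h2⟩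
  apply ContinuousOn.mono _ hcover
  apply LocallyFinite.continuousOn_iUnion
  · exact locallyFinite_of_finite _
  · intro i; exact isClosed_Icc
  · intro i
    apply ContinuousOn.congr _ (plf_eqOn z n hn i i.2)
    apply Continuous.continuousOn
    exact continuous_const.add ((((continuous_const.mul continuous_id).sub
      continuous_const).smul continuous_const))

end BessisAux

namespace BessisAux

variable {k : ℕ}

lemma good_refl {S₂ : Finset (MvPolynomial (Fin k) ℂ)} {a : Fin k → ℂ}
    (ha : ∀ q ∈ S₂, eval a q ≠ 0) : good S₂ a a := by
  intro t ht q hq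
  simp only [sub_self, smul_zero, add_zero]
  exact ha q hq

lemma good_symm {S₂ : Finset (MvPolynomial (Fin k) ℂ)} {a b : Fin k → ℂ}
    (h : good S₂ a b) : good S₂ b a := by
  intro t ht q hq
  have h1 := h (1-t) ⟨by linarith [ht.2], by linarith [ht.1]⟩ q hq
  have heq : a + ((1-t : ℝ) : ℂ) • (b - a) = b + (t : ℂ) • (a - b) := by
    push_cast
    rw [sub_smul, one_smul]
    funext i
    simp only [Pi.add_apply, Pi.sub_apply, Pi.smul_apply, smul_eq_mul]
    ring
  rwa [heq] at h1

/-- evaluation at a point of the segment, real scalar version -/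
lemma good_eval {S₂ : Finset (MvPolynomial (Fin k) ℂ)} {a b : Fin k → ℂ}
    (h : good S₂ a b) (u : ℝ) (hu0 : 0 ≤ u) (hu1 : u ≤ 1) :
    ∀ q ∈ S₂, eval (a + u • (b - a)) q ≠ 0 := by
  intro q hq
  rw [real_smul_eq]
  exact h u ⟨hu0, hu1⟩ q hq

end BessisAux

open BessisAux Metric Set

open MvPolynomial

attribute [local instance] Path.Homotopic.setoid

theorem bessis_surjectivity (k : ℕ) (S₁ S₂ : Finset (MvPolynomial (Fin k) ℂ))
    (hirr₁ : ∀ p ∈ S₁, Irreducible p) (hirr₂ : ∀ q ∈ S₂, Irreducible q)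
    (hdisj : ∀ p ∈ S₁, ∀ q ∈ S₂,
      {y : Fin k → ℂ | eval y p = 0} ≠ {y : Fin k → ℂ | eval y q = 0})
    (x : Fin k → ℂ) (hx : x ∈ {y : Fin k → ℂ |
      (∀ p ∈ S₁, eval y p ≠ 0) ∧ ∀ q ∈ S₂, eval y q ≠ 0}) :
    -- the complement of V₁ ∪ V₂ is included in the complement of V₁ :
    ∀ hsub : {y : Fin k → ℂ | (∀ p ∈ S₁, eval y p ≠ 0) ∧ ∀ q ∈ S₂, eval y q ≠ 0} ⊆
        {y : Fin k → ℂ | ∀ p ∈ S₁, eval y p ≠ 0},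
    -- η, the map induced by this inclusion on homotopy classes of loops at x,
    -- is surjective :
    Function.Surjective
      (fun γ : Path.Homotopic.Quotient
          (⟨x, hx⟩ : {y : Fin k → ℂ | (∀ p ∈ S₁, eval y p ≠ 0) ∧ ∀ q ∈ S₂, eval y q ≠ 0})
          ⟨x, hx⟩ =>
        Path.Homotopic.Quotient.map γ ⟨Set.inclusion hsub, continuous_inclusion hsub⟩) := by
  intro hsub Γ
  obtain ⟨γ, hγ⟩ := Quotient.exists_rep Γ
  -- underlying extended loop
  set G : ℝ → (Fin k → ℂ) := fun t => (γ.extend t : Fin k → ℂ) with hGdef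
  have hGcont : Continuous G := continuous_subtype_val.comp γ.continuous_extend
  have hGmem : ∀ t : ℝ, ∀ p ∈ S₁, eval (G t) p ≠ 0 := fun t => (γ.extend t).2
  have hGuc : UniformContinuous G := by
    have h1 : G = (fun s : unitInterval => ((γ s : Fin k → ℂ))) ∘ (projIcc 0 1 zero_le_one) := by
      funext t
      rfl
    rw [h1]
    exact (CompactSpace.uniformContinuous_of_continuous
      (continuous_subtype_val.comp γ.continuous)).comp
      (LipschitzWith.projIcc zero_le_one).uniformContinuous
  have hG0 : G 0 = x := by
    show (γ.extend 0 : Fin k → ℂ) = x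
    rw [Path.extend_zero]
    rfl
  have hG1 : G 1 = x := by
    show (γ.extend 1 : Fin k → ℂ) = x
    rw [Path.extend_one]
    rfl
  -- the open set X₁
  set U : Set (Fin k → ℂ) := {y | ∀ p ∈ S₁, eval y p ≠ 0} with hUdef
  have hUopen : IsOpen U := by
    have : U = ⋂ p ∈ (S₁ : Set (MvPolynomial (Fin k) ℂ)), {y | eval y p = 0}ᶜ := by
      ext y; simp [hUdef]
    rw [this]
    apply isOpen_biInter_finset
    intro p _
    exact (isClosed_eq (continuous_eval' p) continuous_const).isOpen_compl
  -- thickening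
  have hKcompact : IsCompact (G '' Icc (0:ℝ) 1) := isCompact_Icc.image hGcont
  have hKsub : G '' Icc (0:ℝ) 1 ⊆ U := by
    rintro _ ⟨t, _, rfl⟩
    exact hGmem t
  obtain ⟨ε, hε, hthick⟩ := hKcompact.exists_thickening_subset_open hUopen hKsub
  have hnear : ∀ (y : Fin k → ℂ) (t : ℝ), t ∈ Icc (0:ℝ) 1 → dist y (G t) < ε →
      ∀ p ∈ S₁, eval y p ≠ 0 := by
    intro y t ht hd
    exact hthick (Metric.mem_thickening_iff.mpr ⟨G t, Set.mem_image_of_mem G ht, hd⟩)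
  -- uniform continuity modulus
  obtain ⟨δ₀, hδ₀, hmod⟩ := Metric.uniformContinuous_iff.mp hGuc (ε/4) (by linarith)
  -- choose n
  obtain ⟨n, hn⟩ := exists_nat_gt (max 1 (1/δ₀))
  have hn1 : 1 ≤ n := by
    have := lt_of_le_of_lt (le_max_left 1 (1/δ₀)) hn
    exact_mod_cast this.le
  have hnR : (0:ℝ) < n := by exact_mod_cast hn1
  have hinv : 1/(n:ℝ) < δ₀ := by
    have h2 := lt_of_le_of_lt (le_max_right 1 (1/δ₀)) hn
    rw [div_lt_iff₀ hnR]
    rw [div_lt_iff₀ hδ₀] at h2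
    nlinarith
  -- the chain of vertices
  obtain ⟨z, hz0, hz⟩ := chain S₂ x hx.2 (fun j => G ((j:ℝ)/n)) (ε/4) (by linarith) (n-1)
  set v : ℕ → Fin k → ℂ := fun i => if i < n then z i else x with hvdef
  have hv0 : v 0 = x := by
    simp only [hvdef]
    rw [if_pos (by omega)]
    exact hz0
  have hvn : ∀ i, n ≤ i → v i = x := by
    intro i hi
    simp only [hvdef]
    rw [if_neg (by omega)]
  -- distance of vertices to the loop
  have hvdist : ∀ j, j ≤ n → dist (v j) (G ((j:ℝ)/n)) ≤ ε/4 := by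
    intro j hj
    rcases Nat.eq_zero_or_pos j with rfl | hj0
    · rw [hv0]
      simp only [Nat.cast_zero, zero_div, hG0, dist_self]
      linarith
    · rcases eq_or_lt_of_le hj with rfl | hjn
      · rw [hvn j le_rfl]
        rw [div_self (ne_of_gt hnR), hG1, dist_self]
        linarith
      · have hvz : v j = z j := by simp only [hvdef]; rw [if_pos hjn]
        obtain ⟨j', rfl⟩ := Nat.exists_eq_add_of_lt hj0
        simp only [Nat.zero_add] at *
        have := (hz j' (by omega)).2.2
        rw [hvz]
        exact this.le
  -- goodness of all the segments
  have hgseg : ∀ i, i < n → good S₂ (v i) (v (i+1)) := by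
    intro i hi
    rcases Nat.eq_zero_or_pos i with rfl | hi0
    · rcases eq_or_lt_of_le hn1 with h1 | h1
      · -- n = 1 : segment from x to x
        rw [hv0, hvn 1 (by omega)]
        exact good_refl hx.2
      · have hv1 : v 1 = z 1 := by simp only [hvdef]; rw [if_pos (by omega)]
        rw [hv0, hv1]
        exact (hz 0 (by omega)).2.1
    · rcases (by omega : i + 1 < n ∨ i + 1 = n) with h1 | h1
      · have hvi : v i = z i := by simp only [hvdef]; rw [if_pos (by omega)]
        have hvi1 : v (i+1) = z (i+1) := by simp only [hvdef]; rw [if_pos h1]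
        rw [hvi, hvi1]
        exact (hz i (by omega)).1
      · have hvi : v i = z i := by simp only [hvdef]; rw [if_pos (by omega)]
        have hvi1 : v (i+1) = x := hvn (i+1) (by omega)
        rw [hvi, hvi1]
        apply good_symm
        obtain ⟨i', rfl⟩ := Nat.exists_eq_add_of_lt hi0
        simp only [Nat.zero_add] at *
        exact (hz i' (by omega)).2.1
  -- the PL loop
  set PL : ℝ → Fin k → ℂ := plf v n with hPLdef
  have hPLcont : ContinuousOn PL (Icc (0:ℝ) 1) := plf_continuousOn v n hn1
  -- central estimates
  have hkey : ∀ t, t ∈ Icc (0:ℝ) 1 →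
      dist (PL t) (G t) ≤ ε/2 ∧ ∀ q ∈ S₂, eval (PL t) q ≠ 0 := by
    intro t ht
    obtain ⟨i, hi, hti1, hti2, u, hu0, hu1, hPLt⟩ := plf_spec v n hn1 t ht
    rw [← hPLdef] at hPLt
    have hdistvit : dist (v i) (G t) ≤ ε/2 := by
      have h1 : dist (v i) (G ((i:ℝ)/n)) ≤ ε/4 := hvdist i hi.le
      have h2 : dist (G ((i:ℝ)/n)) (G t) < ε/4 := by
        apply hmod
        rw [Real.dist_eq, abs_sub_lt_iff]
        constructor
        · linarith
        · have h1n : ((i:ℝ)+1)/n - (i:ℝ)/n = 1/n := by field_simp; ring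
          linarith
      linarith [dist_triangle (v i) (G ((i:ℝ)/n)) (G t)]
    have hdistvi1t : dist (v (i+1)) (G t) ≤ ε/2 := by
      have h1 : dist (v (i+1)) (G (((i+1:ℕ):ℝ)/n)) ≤ ε/4 := hvdist (i+1) (by omega)
      have h2 : dist (G (((i+1:ℕ):ℝ)/n)) (G t) < ε/4 := by
        apply hmod
        rw [Real.dist_eq, abs_sub_lt_iff]
        push_cast
        constructor
        · have h1n : ((i:ℝ)+1)/n - (i:ℝ)/n = 1/n := by field_simp; ring
          linarith
        · linarith
      linarith [dist_triangle (v (i+1)) (G (((i+1:ℕ):ℝ)/n)) (G t)]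
    constructor
    · -- distance estimate via convexity
      have hcomb : PL t = (1-u) • (v i) + u • (v (i+1)) := by
        rw [hPLt, smul_sub, sub_smul, one_smul]
        abel
      have hmem : PL t ∈ closedBall (G t) (ε/2) := by
        rw [hcomb]
        exact (convex_closedBall (G t) (ε/2))
          (mem_closedBall.mpr hdistvit) (mem_closedBall.mpr hdistvi1t)
          (by linarith) hu0 (by ring)
      exact mem_closedBall.mp hmem
    · rw [hPLt]
      exact good_eval (hgseg i hi) u hu0 hu1
  -- endpoints of PL
  have hPL0 : PL 0 = x := by
    have hmem0 : (0:ℝ) ∈ Icc (((0:ℕ):ℝ)/n) ((((0:ℕ):ℝ)+1)/n) := by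
      constructor
      · simp
      · positivity
    have := plf_eqOn v n hn1 0 (by omega) hmem0
    rw [hPLdef, this]
    simp [hv0]
  have hPL1 : PL 1 = x := by
    have hcast : ((n-1:ℕ):ℝ) = (n:ℝ) - 1 := by
      push_cast [Nat.cast_sub hn1]; ring
    have hmem1 : (1:ℝ) ∈ Icc (((n-1:ℕ):ℝ)/n) ((((n-1:ℕ):ℝ)+1)/n) := by
      rw [hcast]
      constructor
      · rw [div_le_one hnR]; linarith
      · rw [le_div_iff₀ hnR]; linarith
    have := plf_eqOn v n hn1 (n-1) (by omega) hmem1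
    rw [hPLdef, this]
    simp only [mul_one, hcast]
    rw [show (n:ℝ) - ((n:ℝ)-1) = 1 by ring, one_smul,
      show n-1+1 = n by omega, hvn n le_rfl]
    abel
  -- membership of PL in the complement of V₁ ∪ V₂
  have hPLmem12 : ∀ t : unitInterval, PL ↑t ∈ {y : Fin k → ℂ |
      (∀ p ∈ S₁, eval y p ≠ 0) ∧ ∀ q ∈ S₂, eval y q ≠ 0} := by
    intro t
    refine ⟨hnear (PL ↑t) ↑t t.2 (lt_of_le_of_lt (hkey ↑t t.2).1 (by linarith)),
      (hkey ↑t t.2).2⟩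
  -- the PL loop as a Path
  set PL' : Path (⟨x, hx⟩ : {y : Fin k → ℂ |
      (∀ p ∈ S₁, eval y p ≠ 0) ∧ ∀ q ∈ S₂, eval y q ≠ 0})
      ⟨x, hx⟩ :=
    { toFun := fun t => ⟨PL ↑t, hPLmem12 t⟩
      continuous_toFun := by
        apply Continuous.subtype_mk
        exact hPLcont.comp_continuous continuous_subtype_val (fun t => t.2)
      source' := Subtype.ext hPL0
      target' := Subtype.ext hPL1 } with hPL'def
  refine ⟨⟦PL'⟧, ?_⟩
  dsimp only
  rw [← hγ]
  apply Quotient.sound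
  -- combo membership in U
  have memU : ∀ (θ : ℝ), 0 ≤ θ → θ ≤ 1 → ∀ t : ℝ, t ∈ Icc (0:ℝ) 1 →
      ∀ p ∈ S₁, eval ((1-θ) • PL t + θ • G t) p ≠ 0 := by
    intro θ hθ0 hθ1 t ht
    apply hnear _ t ht
    have h1 : PL t ∈ closedBall (G t) (ε/2) := mem_closedBall.mpr (hkey t ht).1
    have h2 : G t ∈ closedBall (G t) (ε/2) := mem_closedBall_self (by linarith)
    have := (convex_closedBall (G t) (ε/2)) h1 h2
      (show (0:ℝ) ≤ 1-θ by linarith) hθ0 (show (1-θ)+θ = 1 by ring)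
    have hd := mem_closedBall.mp this
    linarith
  set Hfun : unitInterval × unitInterval →
      {y : Fin k → ℂ | ∀ p ∈ S₁, eval y p ≠ 0} :=
    fun p => ⟨(1 - (p.1:ℝ)) • PL ↑p.2 + (p.1:ℝ) • G ↑p.2,
      memU (p.1:ℝ) p.1.2.1 p.1.2.2 ↑p.2 p.2.2⟩ with hHfundef
  have hHfuncont : Continuous Hfun := by
    apply Continuous.subtype_mk
    have c1 : Continuous fun p : unitInterval × unitInterval => PL ↑p.2 :=
      hPLcont.comp_continuous (continuous_subtype_val.comp continuous_snd)
        (fun p => p.2.2)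
    have c2 : Continuous fun p : unitInterval × unitInterval => G ↑p.2 :=
      hGcont.comp (continuous_subtype_val.comp continuous_snd)
    have cth : Continuous fun p : unitInterval × unitInterval => (p.1 : ℝ) :=
      continuous_subtype_val.comp continuous_fst
    exact ((continuous_const.sub cth).smul c1).add (cth.smul c2)
  refine ⟨{ toFun := Hfun, continuous_toFun := hHfuncont,
            map_zero_left := ?_, map_one_left := ?_, prop' := ?_ }⟩
  · intro t
    apply Subtype.ext
    show (1 - ((0:unitInterval):ℝ)) • PL ↑t + ((0:unitInterval):ℝ) • G ↑t = _
    have h0 : ((0:unitInterval):ℝ) = (0:ℝ) := rfl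
    rw [h0, sub_zero, one_smul, zero_smul, add_zero]
    rfl
  · intro t
    apply Subtype.ext
    show (1 - ((1:unitInterval):ℝ)) • PL ↑t + ((1:unitInterval):ℝ) • G ↑t = ↑(γ t)
    have h1 : ((1:unitInterval):ℝ) = (1:ℝ) := rfl
    have h2 : G ↑t = ↑(γ t) := congrArg Subtype.val (γ.extend_extends' t)
    rw [h1, sub_self, zero_smul, one_smul, zero_add, h2]
  · intro θ s hs
    apply Subtype.ext
    rcases hs with rfl | hs
    · show (1 - (θ:ℝ)) • PL ((0:unitInterval):ℝ) + (θ:ℝ) • G ((0:unitInterval):ℝ)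
        = PL ((0:unitInterval):ℝ)
      have h0 : ((0:unitInterval):ℝ) = (0:ℝ) := rfl
      rw [h0, hPL0, hG0, sub_smul, one_smul]
      abel
    · rw [Set.mem_singleton_iff] at hs
      subst hs
      show (1 - (θ:ℝ)) • PL ((1:unitInterval):ℝ) + (θ:ℝ) • G ((1:unitInterval):ℝ)
        = PL ((1:unitInterval):ℝ)
      have h1 : ((1:unitInterval):ℝ) = (1:ℝ) := rfl
      rw [h1, hPL1, hG1, sub_smul, one_smul]
      abel
end

section
/- Let A be a finite subset of ℤ^{1+n}, Γ a face of N = conv(A), and α_k ∈ A a lattice redundant point (i.e., ℤ_{A∩F} = ℤ_{A_k∩F} for every face F of N, where A_k = A∖{α_k}). If α_k ∈ ℤ_{A∩Γ}, then ℤ_{A∩Γ} + ℕ_A = ℤ_{A_k∩Γ} + ℕ_{A_k}, where ℕ_A is the monoid generated by A and 0, and ℤ_S denotes the group generated by S. -/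
/-!
STATEMENT 7 (key semigroup identity in the proof of Proposition 4.3): If α_k ∈ A is
lattice redundant and α_k ∈ ℤ_{A∩Γ} for a face Γ of conv(A), then
ℤ_{A∩Γ} + ℕ_A = ℤ_{A_k∩Γ} + ℕ_{A_k}, where A_k = A ∖ {α_k}.
-/

/-- The coercion ℤ^{1+n} → ℝ^{1+n}. -/
def toRv {n : ℕ} (v : Fin (n + 1) → ℤ) : Fin (n + 1) → ℝ := fun i => (v i : ℝ)

theorem lattice_plus_monoid_eq_of_latticeRedundant (n : ℕ)
    (A : Finset (Fin (n + 1) → ℤ)) (αk : Fin (n + 1) → ℤ) (hαk : αk ∈ A)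
    (Γ : Set (Fin (n + 1) → ℝ))
    -- Γ is a face of N = conv(A) :
    (hΓ : IsExtreme ℝ (convexHull ℝ (toRv '' (A : Set (Fin (n + 1) → ℤ)))) Γ)
    -- α_k is lattice redundant: for every face F of conv(A), ℤ_{A∩F} = ℤ_{A_k∩F} :
    (hred : ∀ F : Set (Fin (n + 1) → ℝ),
      IsExtreme ℝ (convexHull ℝ (toRv '' (A : Set (Fin (n + 1) → ℤ)))) F →
      AddSubgroup.closure {a : Fin (n + 1) → ℤ | a ∈ A ∧ toRv a ∈ F} =
        AddSubgroup.closure {a : Fin (n + 1) → ℤ | a ∈ A.erase αk ∧ toRv a ∈ F})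
    -- α_k ∈ ℤ_{A∩Γ} :
    (hmem : αk ∈ AddSubgroup.closure {a : Fin (n + 1) → ℤ | a ∈ A ∧ toRv a ∈ Γ}) :
    -- ℤ_{A∩Γ} + ℕ_A = ℤ_{A_k∩Γ} + ℕ_{A_k}  (as submonoids of ℤ^{1+n}) :
    (AddSubgroup.closure
        {a : Fin (n + 1) → ℤ | a ∈ A ∧ toRv a ∈ Γ}).toAddSubmonoid ⊔
      AddSubmonoid.closure (A : Set (Fin (n + 1) → ℤ)) =
    (AddSubgroup.closure
        {a : Fin (n + 1) → ℤ | a ∈ A.erase αk ∧ toRv a ∈ Γ}).toAddSubmonoid ⊔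
      AddSubmonoid.closure ((A.erase αk : Finset (Fin (n + 1) → ℤ)) :
        Set (Fin (n + 1) → ℤ)) := by
  have hg := hred Γ hΓ
  rw [hg]
  apply le_antisymm
  · apply sup_le le_sup_left
    rw [AddSubmonoid.closure_le]
    intro a ha
    by_cases h : a = αk
    · subst h
      exact SetLike.le_def.mp le_sup_left (hg ▸ hmem)
    · exact SetLike.le_def.mp le_sup_right
        (AddSubmonoid.subset_closure (Finset.mem_coe.mpr (Finset.mem_erase.mpr ⟨h, ha⟩)))
  · exact sup_le le_sup_left
      (le_trans (AddSubmonoid.closure_mono (by exact_mod_cast Finset.erase_subset αk A))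
        le_sup_right)
end

section
/- Let A be a finite subset of ℤ^{1+n}, α_k ∈ A lattice redundant, and Γ a face of N = conv(A) with α_k ∈ ℤ_{A∩Γ}. Then the quotient semigroups ℕ_A/Γ and ℕ_{A_k}/Γ coincide, where ℕ_A/Γ = (ℤ_{A∩Γ} + ℕ_A)/(ℤ_A ∩ Γ_ℝ) and Γ_ℝ is the linear span of Γ and the origin. -/
/-!
STATEMENT 8 (proof of Proposition 4.3): With α_k ∈ A lattice redundant and Γ a face of
conv(A) with α_k ∈ ℤ_{A∩Γ}, the quotient semigroups ℕ_A/Γ and ℕ_{A_k}/Γ coincide, where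
ℕ_A/Γ is the image of ℤ_{A∩Γ} + ℕ_A in the quotient of the ambient lattice by
ℤ_A ∩ Γ_ℝ, and Γ_ℝ is the linear span of Γ (and the origin).
-/

/-- The coercion ℤ^{1+n} → ℝ^{1+n} as an additive monoid homomorphism. -/
def toRhom (n : ℕ) : (Fin (n + 1) → ℤ) →+ (Fin (n + 1) → ℝ) where
  toFun v := fun i => (v i : ℝ)
  map_zero' := by funext i; simp
  map_add' u v := by funext i; simp

theorem quotient_semigroups_eq_of_latticeRedundant (n : ℕ)
    (A : Finset (Fin (n + 1) → ℤ)) (αk : Fin (n + 1) → ℤ) (hαk : αk ∈ A)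
    (Γ : Set (Fin (n + 1) → ℝ))
    -- Γ is a face of N = conv(A) :
    (hΓ : IsExtreme ℝ (convexHull ℝ (toRhom n '' (A : Set (Fin (n + 1) → ℤ)))) Γ)
    -- α_k is lattice redundant: for every face F of conv(A), ℤ_{A∩F} = ℤ_{A_k∩F} :
    (hred : ∀ F : Set (Fin (n + 1) → ℝ),
      IsExtreme ℝ (convexHull ℝ (toRhom n '' (A : Set (Fin (n + 1) → ℤ)))) F →
      AddSubgroup.closure {a : Fin (n + 1) → ℤ | a ∈ A ∧ toRhom n a ∈ F} =
        AddSubgroup.closure {a : Fin (n + 1) → ℤ | a ∈ A.erase αk ∧ toRhom n a ∈ F})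
    -- α_k ∈ ℤ_{A∩Γ} :
    (hmem : αk ∈ AddSubgroup.closure {a : Fin (n + 1) → ℤ | a ∈ A ∧ toRhom n a ∈ Γ})
    -- K = ℤ_A ∩ Γ_ℝ, the subgroup of ℤ_A of points lying in the linear span of Γ :
    (K : AddSubgroup (Fin (n + 1) → ℤ))
    (hK : K = AddSubgroup.closure (A : Set (Fin (n + 1) → ℤ)) ⊓
        (Submodule.span ℝ Γ).toAddSubgroup.comap (toRhom n)) :
    -- ℕ_A/Γ = ℕ_{A_k}/Γ, as submonoids of the quotient :
    AddSubmonoid.map (QuotientAddGroup.mk' K)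
      ((AddSubgroup.closure
          {a : Fin (n + 1) → ℤ | a ∈ A ∧ toRhom n a ∈ Γ}).toAddSubmonoid ⊔
        AddSubmonoid.closure (A : Set (Fin (n + 1) → ℤ))) =
    AddSubmonoid.map (QuotientAddGroup.mk' K)
      ((AddSubgroup.closure
          {a : Fin (n + 1) → ℤ | a ∈ A.erase αk ∧ toRhom n a ∈ Γ}).toAddSubmonoid ⊔
        AddSubmonoid.closure ((A.erase αk : Finset (Fin (n + 1) → ℤ)) :
          Set (Fin (n + 1) → ℤ))) := by
  have hG := hred Γ hΓ
  congr 1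
  rw [hG]
  apply le_antisymm
  · apply sup_le le_sup_left
    rw [AddSubmonoid.closure_le]
    intro a ha
    by_cases h : a = αk
    · subst h
      exact AddSubmonoid.mem_sup_left (hG ▸ hmem)
    · exact AddSubmonoid.mem_sup_right (AddSubmonoid.subset_closure
        (Finset.mem_coe.2 (Finset.mem_erase.2 ⟨h, ha⟩)))
  · refine sup_le le_sup_left (le_trans (AddSubmonoid.closure_mono ?_) le_sup_right)
    intro a ha
    exact Finset.mem_coe.2 (Finset.mem_of_mem_erase (Finset.mem_coe.1 ha))
end
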